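/- Let λ, μ, ν be integer partitions such that (λ, μ, ν) is (⊞,⊟)-storable. Define θ by θ_1 = λ_1 + max(λ_2, ν_1) − μ_1 and θ_i = min(λ_i, ν_{i−1}) + max(λ_{i+1}, ν_i) − μ_i for i ≥ 2. Then θ is an integer partition and (λ, θ, ν) is (⊞,⊟)-storable. -/
import Mathlib


/-- An integer partition, modeled as a function `l : ℕ → ℕ` where `l i` is the part
`λ_{i+1}` (0-indexed): weakly decreasing with only finitely many nonzero entries. -/
def IsPartition (l : ℕ → ℕ) : Prop :=
  (∀ i, l (i + 1) ≤ l i) ∧ ∃ N, ∀ i, N ≤ i → l i = 0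

/-- `(l, m)` is a storable pair: `λ_i ≥ μ_i ≥ λ_{i+1}` for all `i ≥ 1` (0-indexed). -/
def StorablePair (l m : ℕ → ℕ) : Prop :=
  ∀ i, m i ≤ l i ∧ l (i + 1) ≤ m i

/-- `(λ, μ, ν)` is `(⊞,⊞)`-storable: `(λ, μ)` and `(ν, μ)` are storable pairs. -/
def StorablePP (l m n : ℕ → ℕ) : Prop := StorablePair l m ∧ StorablePair n m

/-- `(λ, μ, ν)` is `(⊞,⊟)`-storable: `(λ, μ)` and `(μ, ν)` are storable pairs. -/
def StorablePM (l m n : ℕ → ℕ) : Prop := StorablePair l m ∧ StorablePair m n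

/-- `(λ, μ, ν)` is `(⊟,⊞)`-storable: `(μ, λ)` and `(ν, μ)` are storable pairs. -/
def StorableMP (l m n : ℕ → ℕ) : Prop := StorablePair m l ∧ StorablePair n m

/-- `(λ, μ, ν)` is `(⊟,⊟)`-storable: `(μ, λ)` and `(μ, ν)` are storable pairs. -/
def StorableMM (l m n : ℕ → ℕ) : Prop := StorablePair m l ∧ StorablePair m n

/-- `(λ, μ, ν)` is strongly `(⊟,⊟)`-storable: `(⊟,⊟)`-storable with `λ_1 = μ_1` or `μ_1 = ν_1`. -/
def StronglyStorableMM (l m n : ℕ → ℕ) : Prop :=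
  StorableMM l m n ∧ (l 0 = m 0 ∨ m 0 = n 0)

/-- Diagonal transformation for a `(⊞,⊞)`-storable triplet:
`θ_1 = max(λ_1, ν_1)`, `θ_i = min(λ_{i−1}, ν_{i−1}) + max(λ_i, ν_i) − μ_{i−1}` for `i ≥ 2`. -/
def diagPP (l m n : ℕ → ℕ) : ℕ → ℕ
  | 0 => max (l 0) (n 0)
  | j + 1 => min (l j) (n j) + max (l (j + 1)) (n (j + 1)) - m j

/-- Diagonal transformation for a `(⊞,⊟)`-storable triplet:
`θ_1 = λ_1 + max(λ_2, ν_1) − μ_1`, `θ_i = min(λ_i, ν_{i−1}) + max(λ_{i+1}, ν_i) − μ_i` for `i ≥ 2`. -/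
def diagPM (l m n : ℕ → ℕ) : ℕ → ℕ
  | 0 => l 0 + max (l 1) (n 0) - m 0
  | j + 1 => min (l (j + 1)) (n j) + max (l (j + 2)) (n (j + 1)) - m (j + 1)

/-- Diagonal transformation for a `(⊟,⊞)`-storable triplet:
`θ_1 = ν_1 + max(λ_1, ν_2) − μ_1`, `θ_i = min(λ_{i−1}, ν_i) + max(λ_i, ν_{i+1}) − μ_i` for `i ≥ 2`. -/
def diagMP (l m n : ℕ → ℕ) : ℕ → ℕ
  | 0 => n 0 + max (l 0) (n 1) - m 0
  | j + 1 => min (l j) (n (j + 1)) + max (l (j + 1)) (n (j + 2)) - m (j + 1)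

/-- Diagonal transformation for a `(⊟,⊟)`-storable triplet:
`θ_i = min(λ_i, ν_i) + max(λ_{i+1}, ν_{i+1}) − μ_{i+1}` for all `i ≥ 1`. -/
def diagMM (l m n : ℕ → ℕ) (j : ℕ) : ℕ :=
  min (l j) (n j) + max (l (j + 1)) (n (j + 1)) - m (j + 1)

/-- If `(λ, μ, ν)` is `(⊞,⊟)`-storable, then `θ = diag(λ, μ, ν)` is an integer partition
and `(λ, θ, ν)` is `(⊞,⊟)`-storable. -/
theorem diagPM_storable (l m n : ℕ → ℕ)
    (hl : IsPartition l) (hm : IsPartition m) (hn : IsPartition n)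
    (h : StorablePM l m n) :
    IsPartition (diagPM l m n) ∧ StorablePM l (diagPM l m n) n := by
  obtain ⟨h1, h2⟩ := h
  have pair : StorablePair l (diagPM l m n) ∧ StorablePair (diagPM l m n) n := by
    constructor
    · intro i
      cases i with
      | zero =>
        have a := h1 0; have b := h1 1; have b2 := h1 2; have c := h2 0; have c2 := h2 1
        simp only [diagPM, add_assoc, Nat.reduceAdd] at *; omega
      | succ j =>
        have a := h1 (j + 1); have b := h1 (j + 2); have b2 := h1 (j + 3)
        have c := h2 (j + 1); have c2 := h2 (j + 2); have d := h2 j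
        simp only [diagPM, add_assoc, Nat.reduceAdd] at *; omega
    · intro i
      cases i with
      | zero =>
        have a := h1 0; have b := h1 1; have b2 := h1 2; have c := h2 0; have c2 := h2 1
        simp only [diagPM, add_assoc, Nat.reduceAdd] at *; omega
      | succ j =>
        have a := h1 (j + 1); have b := h1 (j + 2); have b2 := h1 (j + 3)
        have c := h2 (j + 1); have c2 := h2 (j + 2); have d := h2 j
        simp only [diagPM, add_assoc, Nat.reduceAdd] at *; omega
  refine ⟨⟨fun i => ?_, ?_⟩, pair⟩
  · calc diagPM l m n (i + 1) ≤ n i := (pair.2 i).2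
      _ ≤ diagPM l m n i := (pair.2 i).1
  · obtain ⟨N, hN⟩ := hl.2
    refine ⟨N, fun i hi => ?_⟩
    cases i with
    | zero =>
      have a := hN 0 hi; have b := hN 1 (by omega)
      have c := h2 0; have d := h1 0
      simp only [diagPM, add_assoc, Nat.reduceAdd] at *; omega
    | succ j =>
      have a := hN (j + 1) hi; have b := hN (j + 2) (by omega)
      have c := h2 (j + 1); have d := h1 (j + 1)
      simp only [diagPM, add_assoc, Nat.reduceAdd] at *; omega
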